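/- Generalized Menelaus theorem: Let n ≥ 1 and let P₁, …, P_{n+1} be affinely independent points in ℝⁿ (so their affine span is all of ℝⁿ). For each i = 1, …, n+1 let ξᵢ ∈ ℝ with ξᵢ ≠ 0 and ξᵢ ≠ 1, and define P_{i,i+1} = (1 − ξᵢ)Pᵢ + ξᵢP_{i+1}, where indices are read modulo n+1 (so P_{n+2} = P₁). Then the n+1 points P_{1,2}, P_{2,3}, …, P_{n+1,1} lie in an affine subspace of dimension at most n−1 if and only if ∏_{i=1}^{n+1} ξᵢ/(1 − ξᵢ) = (−1)^{n+1}. -/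

import Mathlib

open Finset
open Fin.NatCast

/-- Generalized Menelaus theorem: `n+1` affinely independent points in `ℝⁿ`,
with a point `Q i` chosen on each line `(P i, P (i+1))` (indices mod `n+1`),
dividing it in the ratio `ξ i / (1 - ξ i)`.  The points `Q i` lie in an
affine subspace of dimension at most `n - 1` iff the product of the ratios
equals `(-1)^(n+1)`. -/
theorem generalized_menelaus (n : ℕ) (hn : 1 ≤ n)
    (P : Fin (n + 1) → EuclideanSpace ℝ (Fin n))
    (hP : AffineIndependent ℝ P)
    (ξ : Fin (n + 1) → ℝ) (h0 : ∀ i, ξ i ≠ 0) (h1 : ∀ i, ξ i ≠ 1)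
    (Q : Fin (n + 1) → EuclideanSpace ℝ (Fin n))
    (hQ : ∀ i, Q i = (1 - ξ i) • P i + ξ i • P (i + 1)) :
    Module.finrank ℝ (vectorSpan ℝ (Set.range Q)) ≤ n - 1 ↔
      (∏ i, ξ i / (1 - ξ i)) = (-1 : ℝ) ^ (n + 1) := by
  have h1' : ∀ i : Fin (n+1), (1 : ℝ) - ξ i ≠ 0 := fun i h => h1 i (by linarith)
  have hcard : Fintype.card (Fin (n+1)) = (n - 1) + 2 := by
    simp only [Fintype.card_fin]; omega
  rw [finrank_vectorSpan_le_iff_not_affineIndependent ℝ Q hcard]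
  -- shared computations, for arbitrary weights w
  have hc_sum : ∀ w : Fin (n+1) → ℝ,
      ∑ j, ((1 - ξ j) * w j + ξ (j-1) * w (j-1)) = ∑ j, w j := by
    intro w
    have h2 : ∑ j, ξ (j-1) * w (j-1) = ∑ j, ξ j * w j :=
      Equiv.sum_comp (Equiv.subRight (1 : Fin (n+1))) (fun j => ξ j * w j)
    rw [Finset.sum_add_distrib, h2, ← Finset.sum_add_distrib]
    exact Finset.sum_congr rfl fun j _ => by ring
  have hc_comb : ∀ w : Fin (n+1) → ℝ,
      ∑ j, ((1 - ξ j) * w j + ξ (j-1) * w (j-1)) • P j = ∑ j, w j • Q j := by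
    intro w
    have e2 : ∑ j, (ξ (j-1) * w (j-1)) • P j = ∑ j, (ξ j * w j) • P (j+1) := by
      rw [← Equiv.sum_comp (Equiv.addRight (1 : Fin (n+1)))
        (fun j => (ξ (j-1) * w (j-1)) • P j)]
      exact Finset.sum_congr rfl fun j _ => by
        simp [add_sub_cancel_right]
    calc ∑ j, ((1 - ξ j) * w j + ξ (j-1) * w (j-1)) • P j
        = ∑ j, (((1 - ξ j) * w j) • P j + (ξ (j-1) * w (j-1)) • P j) := by
          simp only [add_smul]
      _ = ∑ j, ((1 - ξ j) * w j) • P j + ∑ j, (ξ (j-1) * w (j-1)) • P j :=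
          Finset.sum_add_distrib
      _ = ∑ j, ((1 - ξ j) * w j) • P j + ∑ j, (ξ j * w j) • P (j+1) := by rw [e2]
      _ = ∑ j, w j • Q j := by
          rw [← Finset.sum_add_distrib]
          refine Finset.sum_congr rfl fun j _ => ?_
          rw [hQ, smul_add, smul_smul, smul_smul, mul_comm (w j), mul_comm (w j)]
  constructor
  · -- dependent ⇒ product condition
    intro hnd
    rw [affineIndependent_iff_of_fintype] at hnd
    push_neg at hnd
    obtain ⟨w, hw0, hwv, i, hwi⟩ := hnd
    rw [Finset.univ.weightedVSub_eq_linear_combination hw0] at hwv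
    have hc0 : ∀ j, (1 - ξ j) * w j + ξ (j-1) * w (j-1) = 0 := by
      have := affineIndependent_iff.1 hP Finset.univ
        (fun j => (1 - ξ j) * w j + ξ (j-1) * w (j-1))
        (by rw [hc_sum w, hw0]) (by rw [hc_comb w]; exact hwv)
      exact fun j => this j (Finset.mem_univ j)
    have hrel : ∀ j, (1 - ξ j) * w j = -(ξ (j-1) * w (j-1)) := fun j => by
      have := hc0 j; linarith
    have hstep : ∀ j, w j = 0 → w (j+1) = 0 := by
      intro j hj
      have h := hc0 (j+1)
      rw [add_sub_cancel_right, hj, mul_zero, add_zero] at h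
      rcases mul_eq_zero.1 h with h' | h'
      · exact absurd (by linarith : ξ (j+1) = 1) (h1 _)
      · exact h'
    have hall : ∀ j, w j ≠ 0 := by
      intro j hj
      have hk : ∀ k : ℕ, w (j + (k : Fin (n+1))) = 0 := by
        intro k; induction k with
        | zero => simpa using hj
        | succ k ih =>
          have h := hstep _ ih
          have : ((k+1 : ℕ) : Fin (n+1)) = (k : Fin (n+1)) + 1 := by push_cast; ring
          rw [this, ← add_assoc]
          exact h
      have h := hk (i - j).val
      rw [Fin.cast_val_eq_self, add_comm, sub_add_cancel] at h
      exact hwi h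
    have hwne : ∏ j, w j ≠ 0 := Finset.prod_ne_zero_iff.2 fun j _ => hall j
    have hξne : ∏ j, ξ j ≠ 0 := Finset.prod_ne_zero_iff.2 fun j _ => h0 j
    have hprodeq : (∏ j, (1 - ξ j)) * ∏ j, w j = ((-1:ℝ)^(n+1) * ∏ j, ξ j) * ∏ j, w j := by
      calc (∏ j, (1 - ξ j)) * ∏ j, w j = ∏ j, ((1 - ξ j) * w j) :=
            (Finset.prod_mul_distrib).symm
        _ = ∏ j, (-(ξ (j-1) * w (j-1))) := Finset.prod_congr rfl fun j _ => hrel j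
        _ = ∏ j, (-(ξ j * w j)) :=
            Equiv.prod_comp (Equiv.subRight (1 : Fin (n+1))) (fun j => -(ξ j * w j))
        _ = ∏ j, ((-1 : ℝ) * (ξ j * w j)) := Finset.prod_congr rfl fun j _ => by ring
        _ = ((-1:ℝ)^(n+1) * ∏ j, ξ j) * ∏ j, w j := by
            rw [Finset.prod_mul_distrib, Finset.prod_mul_distrib, Finset.prod_const,
              Finset.card_univ, Fintype.card_fin, mul_assoc]
    have hkey : (∏ j, (1 - ξ j)) = (-1:ℝ)^(n+1) * ∏ j, ξ j :=
      mul_right_cancel₀ hwne hprodeq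
    rw [Finset.prod_div_distrib, hkey, div_eq_iff (mul_ne_zero (pow_ne_zero _ (by norm_num)) hξne),
      ← mul_assoc, ← pow_add]
    rw [Even.neg_one_pow ⟨n+1, rfl⟩, one_mul]
  · -- product condition ⇒ dependent
    intro hprod
    have hne1 : ∏ j, (1 - ξ j) ≠ 0 := Finset.prod_ne_zero_iff.2 fun j _ => h1' j
    rw [Finset.prod_div_distrib, div_eq_iff hne1] at hprod
    -- natural-number indexed product form
    have hNprod : ∏ k ∈ Finset.range (n+1), ξ (k : Fin (n+1)) =
        (-1:ℝ)^(n+1) * ∏ k ∈ Finset.range (n+1), (1 - ξ (k : Fin (n+1))) := by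
      rw [← Fin.prod_univ_eq_prod_range (fun k => ξ (k : Fin (n+1))),
        ← Fin.prod_univ_eq_prod_range (fun k => (1 - ξ (k : Fin (n+1))))]
      simp only [Fin.cast_val_eq_self]
      exact hprod
    set w : Fin (n+1) → ℝ := fun j =>
      (-1:ℝ)^(j:ℕ) * (∏ k ∈ Finset.range (j:ℕ), ξ (k : Fin (n+1))) *
        ∏ k ∈ Finset.Ico ((j:ℕ)+1) (n+1), (1 - ξ (k : Fin (n+1))) with hwdef
    have hrelF : ∀ j : Fin (n+1), (1 - ξ (j+1)) * w (j+1) + ξ j * w j = 0 := by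
      intro j
      by_cases hj : j = Fin.last n
      · subst hj
        have hlast1 : (Fin.last n : Fin (n+1)) + 1 = 0 := by
          ext; rw [Fin.val_add_one, if_pos rfl]; rfl
        rw [hlast1]
        have hv0 : ((0 : Fin (n+1)) : ℕ) = 0 := rfl
        have hvlast : ((Fin.last n : Fin (n+1)) : ℕ) = n := rfl
        simp only [hwdef, hv0, hvlast]
        rw [Finset.Ico_self (n+1), Finset.prod_empty, pow_zero, Finset.range_zero,
          Finset.prod_empty, one_mul, one_mul, mul_one]
        have e1 : (1 - ξ 0) * ∏ k ∈ Finset.Ico 1 (n+1), (1 - ξ (k:Fin (n+1))) =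
            ∏ k ∈ Finset.range (n+1), (1 - ξ (k:Fin (n+1))) := by
          rw [Finset.range_eq_Ico,
            Finset.prod_eq_prod_Ico_succ_bot (Nat.succ_pos n) (fun k => 1 - ξ (k:Fin (n+1)))]
          norm_num
        have e3 : ξ (Fin.last n) * ((-1:ℝ)^n * ∏ k ∈ Finset.range n, ξ (k:Fin (n+1))) =
            - ∏ k ∈ Finset.range (n+1), (1 - ξ (k:Fin (n+1))) := by
          calc ξ (Fin.last n) * ((-1:ℝ)^n * ∏ k ∈ Finset.range n, ξ (k:Fin (n+1)))
              = (-1:ℝ)^n * ((∏ k ∈ Finset.range n, ξ (k:Fin (n+1))) * ξ ((n:ℕ):Fin (n+1))) := by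
                rw [Fin.natCast_eq_last]; ring
            _ = (-1:ℝ)^n * ∏ k ∈ Finset.range (n+1), ξ (k:Fin (n+1)) := by
                rw [Finset.prod_range_succ]
            _ = (-1:ℝ)^n * ((-1:ℝ)^(n+1) * ∏ k ∈ Finset.range (n+1), (1 - ξ (k:Fin (n+1)))) := by
                rw [hNprod]
            _ = - ∏ k ∈ Finset.range (n+1), (1 - ξ (k:Fin (n+1))) := by
                rw [← mul_assoc, ← pow_add, Odd.neg_one_pow ⟨n, by ring⟩]; ring
        rw [e1, e3]
        ring
      · have hlt : (j : ℕ) < n := by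
          rcases Fin.lt_or_eq_of_le (Fin.le_last j) with h | h
          · exact h
          · exact absurd h hj
        have hv1 : ((j + 1 : Fin (n+1)) : ℕ) = (j : ℕ) + 1 :=
          Fin.val_add_one_of_lt (Fin.lt_last_iff_ne_last.2 hj)
        simp only [hwdef, hv1]
        have hb : ∏ k ∈ Finset.Ico ((j:ℕ)+1) (n+1), (1 - ξ (k:Fin (n+1))) =
            (1 - ξ (((j:ℕ)+1 : ℕ) : Fin (n+1))) *
              ∏ k ∈ Finset.Ico ((j:ℕ)+1+1) (n+1), (1 - ξ (k:Fin (n+1))) :=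
          Finset.prod_eq_prod_Ico_succ_bot (by omega) _
        have hr : ∏ k ∈ Finset.range ((j:ℕ)+1), ξ (k:Fin (n+1)) =
            (∏ k ∈ Finset.range (j:ℕ), ξ (k:Fin (n+1))) * ξ ((j:ℕ) : Fin (n+1)) :=
          Finset.prod_range_succ _ _
        have hcast1 : (((j:ℕ)+1 : ℕ) : Fin (n+1)) = j + 1 := by push_cast; simp
        have hcast2 : (((j:ℕ)) : Fin (n+1)) = j := Fin.cast_val_eq_self j
        rw [hb, hr, hcast1, hcast2, pow_succ]
        ring
    have hc0 : ∀ j : Fin (n+1), (1 - ξ j) * w j + ξ (j-1) * w (j-1) = 0 := by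
      intro j
      have := hrelF (j - 1)
      rwa [sub_add_cancel] at this
    have hsum0 : ∑ j, w j = 0 := by
      rw [← hc_sum w]
      exact Finset.sum_eq_zero fun j _ => hc0 j
    have hcomb0 : ∑ j, w j • Q j = 0 := by
      rw [← hc_comb w]
      exact Finset.sum_eq_zero fun j _ => by rw [hc0 j, zero_smul]
    intro hind
    have hzero := affineIndependent_iff.1 hind Finset.univ w hsum0 hcomb0 0 (Finset.mem_univ 0)
    have hw0 : w 0 = ∏ k ∈ Finset.Ico 1 (n+1), (1 - ξ (k:Fin (n+1))) := by
      simp [hwdef]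
    rw [hw0] at hzero
    exact (Finset.prod_ne_zero_iff.2 fun k _ => h1' _) hzero
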